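/- Let $\{(\Omega_i,\Sigma_i,\mu_i)\}_{i\in\mathbb{N}}$ be a sequence of measure spaces, $\mathscr{C}$ a finite rectangle and $\{\mathscr{C}_n\}_{n\in\mathbb{N}}$ pairwise disjoint finite rectangles with $\biguplus_{n\in\mathbb{N}} \mathscr{C}_n \subset \mathscr{C}$. Then $\sum_{n\in\mathbb{N}} \mathrm{vol}(\mathscr{C}_n) \le \mathrm{vol}(\mathscr{C})$. -/

import Mathlib

open MeasureTheory Filter Set
open scoped ENNReal

/-- `HasVol μ C v` says that the rectangle `∏ᵢ Cᵢ` is a *finite rectangle*: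
all sides are measurable with finite measure and the infinite product
`∏ᵢ μᵢ(Cᵢ)` converges to the finite value `v ∈ [0,∞)` (its volume). -/
def HasVol {Ω : ℕ → Type*} [∀ i, MeasurableSpace (Ω i)]
    (μ : ∀ i, Measure (Ω i)) (C : ∀ i, Set (Ω i)) (v : ℝ) : Prop :=
  (∀ i, MeasurableSet (C i)) ∧ (∀ i, μ i (C i) ≠ ∞) ∧
    Tendsto (fun m => ∏ i ∈ Finset.range m, (μ i (C i)).toReal) atTop (nhds v)

theorem stmt_8 {Ω : ℕ → Type*} [∀ i, MeasurableSpace (Ω i)] (μ : ∀ i, Measure (Ω i))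
    (C : ∀ i, Set (Ω i)) (v : ℝ) (hC : HasVol μ C v)
    (D : ℕ → ∀ i, Set (Ω i)) (w : ℕ → ℝ) (hD : ∀ n, HasVol μ (D n) (w n))
    (hdisj : Pairwise (Function.onFun Disjoint (fun n => Set.univ.pi (D n))))
    (hsub : (⋃ n, Set.univ.pi (D n)) ⊆ Set.univ.pi C) :
    ∑' n, ENNReal.ofReal (w n) ≤ ENNReal.ofReal v := by
  classical
  have hw0 : ∀ n, 0 ≤ w n := fun n =>
    ge_of_tendsto (hD n).2.2 (Eventually.of_forall fun m =>
      Finset.prod_nonneg fun i _ => ENNReal.toReal_nonneg)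
  have hempty : ∀ n, ¬ (Set.univ.pi (D n)).Nonempty → w n = 0 := by
    intro n hn
    rw [Set.not_nonempty_iff_eq_empty, Set.univ_pi_eq_empty_iff] at hn
    obtain ⟨i, hi⟩ := hn
    have h0 : Tendsto (fun m => ∏ j ∈ Finset.range m, (μ j (D n j)).toReal)
        atTop (nhds (0 : ℝ)) := by
      apply Tendsto.congr' _ tendsto_const_nhds
      filter_upwards [eventually_ge_atTop (i + 1)] with m hm
      symm
      apply Finset.prod_eq_zero (Finset.mem_range.2 hm)
      simp [hi]
    exact tendsto_nhds_unique (hD n).2.2 h0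
  have main : ∀ N, ∑ n ∈ Finset.range N, ENNReal.ofReal (w n) ≤ ENNReal.ofReal v := by
    intro N
    set F := (Finset.range N).filter (fun n => (Set.univ.pi (D n)).Nonempty) with hF
    -- sides of nonempty rectangles are contained in the sides of C
    have hsubn : ∀ n ∈ F, ∀ i, D n i ⊆ C i := by
      intro n hn i y hy
      obtain ⟨x, hx⟩ := (Finset.mem_filter.1 hn).2
      have hx' : ∀ j, x j ∈ D n j := fun j => hx j (mem_univ j)
      have hmem : Function.update x i y ∈ Set.univ.pi (D n) := by
        intro j _
        rcases eq_or_ne j i with rfl | hne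
        · simpa using hy
        · simpa [Function.update_of_ne hne] using hx' j
      have := hsub (Set.mem_iUnion.2 ⟨n, hmem⟩) i (mem_univ i)
      simpa using this
    -- separating coordinates for disjoint nonempty rectangles
    have hsep : ∀ n n', ∃ k, n ∈ F → n' ∈ F → n ≠ n' → D n k ∩ D n' k = ∅ := by
      intro n n'
      by_cases h : n ∈ F ∧ n' ∈ F ∧ n ≠ n'
      · obtain ⟨-, -, hne⟩ := h
        by_contra hcon
        push_neg at hcon
        have hne2 : ∀ k, (D n k ∩ D n' k).Nonempty := fun k => (hcon k).2.2.2
        have hne3 : (Set.univ.pi (fun k => D n k ∩ D n' k)).Nonempty :=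
          Set.univ_pi_nonempty_iff.2 hne2
        obtain ⟨x, hx⟩ := hne3
        have hx1 : x ∈ Set.univ.pi (D n) := fun j hj => (hx j hj).1
        have hx2 : x ∈ Set.univ.pi (D n') := fun j hj => (hx j hj).2
        exact Set.disjoint_left.1 (hdisj hne) hx1 hx2
      · exact ⟨0, fun h1 h2 h3 => absurd ⟨h1, h2, h3⟩ h⟩
    choose K hK using hsep
    set m₀ := ((Finset.range N).sup fun n => (Finset.range N).sup fun n' => K n n') + 1 with hm₀
    have hKlt : ∀ n ∈ F, ∀ n' ∈ F, K n n' < m₀ := by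
      intro n hn n' hn'
      have h1 : n ∈ Finset.range N := Finset.mem_of_mem_filter _ hn
      have h2 : n' ∈ Finset.range N := Finset.mem_of_mem_filter _ hn'
      calc K n n' ≤ (Finset.range N).sup fun n' => K n n' := Finset.le_sup h2
        _ ≤ (Finset.range N).sup fun n => (Finset.range N).sup fun n' => K n n' :=
            Finset.le_sup (f := fun n => (Finset.range N).sup fun n' => K n n') h1
        _ < m₀ := Nat.lt_succ_self _
    -- the finite-dimensional inequality
    have key : ∀ m, m₀ ≤ m →
        ∑ n ∈ F, ∏ i ∈ Finset.range m, μ i (D n i) ≤ ∏ i ∈ Finset.range m, μ i (C i) := by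
      intro m hm
      haveI : ∀ i : Fin m, IsFiniteMeasure ((μ i.1).restrict (C i.1)) := fun i =>
        ⟨by rw [Measure.restrict_apply_univ]; exact (hC.2.1 i.1).lt_top⟩
      set ρ : Measure (∀ i : Fin m, Ω i.1) :=
        Measure.pi (fun i : Fin m => (μ i.1).restrict (C i.1)) with hρ
      set B : ℕ → Set (∀ i : Fin m, Ω i.1) :=
        fun n => Set.univ.pi (fun i : Fin m => D n i.1) with hB
      have hbox : ∀ n ∈ F, ρ (B n) = ∏ i ∈ Finset.range m, μ i (D n i) := by
        intro n hn
        rw [hB, Measure.pi_pi]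
        rw [← Fin.prod_univ_eq_prod_range (fun i => μ i (D n i)) m]
        refine Finset.prod_congr rfl fun i _ => ?_
        rw [Measure.restrict_apply ((hD n).1 i.1),
          Set.inter_eq_self_of_subset_left (hsubn n hn i.1)]
      have hBd : (↑F : Set ℕ).PairwiseDisjoint B := by
        intro n hn n' hn' hne
        rw [Function.onFun, Set.disjoint_left]
        intro x hx hx'
        have hk := hK n n' hn hn' hne
        have hklt : K n n' < m := lt_of_lt_of_le (hKlt n hn n' hn') hm
        have h1 : x ⟨K n n', hklt⟩ ∈ D n (K n n') := hx ⟨K n n', hklt⟩ (mem_univ _)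
        have h2 : x ⟨K n n', hklt⟩ ∈ D n' (K n n') := hx' ⟨K n n', hklt⟩ (mem_univ _)
        have : x ⟨K n n', hklt⟩ ∈ D n (K n n') ∩ D n' (K n n') := ⟨h1, h2⟩
        rw [hk] at this
        exact this
      have hBm : ∀ n ∈ F, MeasurableSet (B n) := fun n _ =>
        MeasurableSet.univ_pi fun i => (hD n).1 i.1
      calc ∑ n ∈ F, ∏ i ∈ Finset.range m, μ i (D n i)
          = ∑ n ∈ F, ρ (B n) := by
            exact (Finset.sum_congr rfl fun n hn => (hbox n hn).symm)
        _ = ρ (⋃ n ∈ F, B n) := (measure_biUnion_finset hBd hBm).symm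
        _ ≤ ρ (Set.univ.pi fun i : Fin m => C i.1) := by
            apply measure_mono
            refine Set.iUnion₂_subset fun n hn x hx i _ => ?_
            exact hsubn n hn i.1 (hx i (mem_univ i))
        _ = ∏ i ∈ Finset.range m, μ i (C i) := by
            rw [Measure.pi_pi, ← Fin.prod_univ_eq_prod_range (fun i => μ i (C i)) m]
            refine Finset.prod_congr rfl fun i _ => ?_
            rw [Measure.restrict_apply_self]
    -- realify
    have key2 : ∀ m, m₀ ≤ m →
        ∑ n ∈ F, ∏ i ∈ Finset.range m, (μ i (D n i)).toReal
          ≤ ∏ i ∈ Finset.range m, (μ i (C i)).toReal := by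
      intro m hm
      have hDfin : ∀ n, (∏ i ∈ Finset.range m, μ i (D n i)) ≠ ∞ := fun n =>
        ENNReal.prod_ne_top fun i _ => (hD n).2.1 i
      have hCfin : (∏ i ∈ Finset.range m, μ i (C i)) ≠ ∞ :=
        ENNReal.prod_ne_top fun i _ => hC.2.1 i
      have := ENNReal.toReal_mono hCfin (key m hm)
      rw [ENNReal.toReal_sum (fun n _ => hDfin n)] at this
      simpa [ENNReal.toReal_prod] using this
    -- pass to the limit in m
    have hlim1 : Tendsto (fun m => ∑ n ∈ F, ∏ i ∈ Finset.range m, (μ i (D n i)).toReal)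
        atTop (nhds (∑ n ∈ F, w n)) :=
      tendsto_finset_sum F fun n _ => (hD n).2.2
    have hFle : ∑ n ∈ F, w n ≤ v := by
      refine le_of_tendsto_of_tendsto hlim1 hC.2.2 ?_
      filter_upwards [eventually_ge_atTop m₀] with m hm using key2 m hm
    calc ∑ n ∈ Finset.range N, ENNReal.ofReal (w n)
        = ∑ n ∈ F, ENNReal.ofReal (w n) := by
          refine (Finset.sum_subset (Finset.filter_subset _ _) ?_).symm
          intro n hn hnF
          have : ¬ (Set.univ.pi (D n)).Nonempty := fun h =>
            hnF (Finset.mem_filter.2 ⟨hn, h⟩)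
          simp [hempty n this]
      _ = ENNReal.ofReal (∑ n ∈ F, w n) :=
          (ENNReal.ofReal_sum_of_nonneg fun n _ => hw0 n).symm
      _ ≤ ENNReal.ofReal v := ENNReal.ofReal_le_ofReal hFle
  rw [ENNReal.tsum_eq_iSup_nat]
  exact iSup_le main
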